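/- Let X be an Archimedean Riesz space with strong order unit e, endowed with the norm ‖x‖ = inf{λ ≥ 0 : |x| ≤ λe}, and let N be a proper uniformly closed order ideal of X. Then N = ⋂_{ξ ∈ Δ_N} N_ξ, where Δ_N is the set of positive continuous linear functionals ξ on X with ξ(e) = 1 and ξ(N) = {0}, and N_ξ = {x ∈ X : ξ(|x|) = 0}. In particular, Δ_N is nonempty. -/

import Mathlib

open Filter Set Pointwise

/-- The unit norm `‖x‖ = inf {λ ≥ 0 : |x| ≤ λ • e}` of a Riesz space with strong
order unit `e`. -/
noncomputable def unitNorm {X : Type*} [AddCommGroup X] [Lattice X] [Module ℝ X]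
    (e : X) (x : X) : ℝ :=
  sInf {l : ℝ | 0 ≤ l ∧ |x| ≤ l • e}

/-- `Δ_N`: the positive (hence automatically norm-continuous) linear functionals
`ξ` on `X` with `ξ e = 1` annihilating `N`. -/
def DeltaN {X : Type*} [AddCommGroup X] [Lattice X] [Module ℝ X]
    (e : X) (N : Submodule ℝ X) : Set (X → ℝ) :=
  {ξ | IsLinearMap ℝ ξ ∧ (∀ x : X, 0 ≤ x → 0 ≤ ξ x) ∧ ξ e = 1 ∧ ∀ x ∈ N, ξ x = 0}

/-- If `N` is a proper uniformly closed (equivalently, closed in the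
unit norm) order ideal of an Archimedean Riesz space `X` with strong order unit `e`,
then `N = ⋂_{ξ ∈ Δ_N} N_ξ` where `N_ξ = {x : ξ |x| = 0}`; in particular `Δ_N ≠ ∅`. -/
theorem statement12 {X : Type*} [AddCommGroup X] [Lattice X] [Module ℝ X]
    (hadd : ∀ x y z : X, x ≤ y → x + z ≤ y + z)
    (hsmul : ∀ (c : ℝ) (x : X), 0 ≤ c → 0 ≤ x → 0 ≤ c • x)
    (harch : ∀ x y : X, 0 ≤ x → (∀ n : ℕ, n • x ≤ y) → x = 0)
    (e : X) (he : e ≠ 0)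
    (hunit : ∀ x : X, ∃ l : ℝ, 0 ≤ l ∧ -(l • e) ≤ x ∧ x ≤ l • e)
    (N : Submodule ℝ X)
    (hsolid : ∀ x y : X, |x| ≤ |y| → y ∈ N → x ∈ N)
    (hproper : (N : Set X) ≠ Set.univ)
    (hclosed : ∀ (x : X) (u : ℕ → X), (∀ n, u n ∈ N) →
      Filter.Tendsto (fun n => unitNorm e (u n - x)) Filter.atTop (nhds 0) → x ∈ N) :
    (DeltaN e N).Nonempty ∧
    (N : Set X) = ⋂ ξ ∈ DeltaN e N, {x : X | ξ |x| = 0} := by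
  classical
  haveI : IsOrderedAddMonoid X :=
    { add_le_add_left := fun a b h c => hadd a b c h }
  -- scalar monotonicity
  have smono : ∀ (c : ℝ) (a b : X), 0 ≤ c → a ≤ b → c • a ≤ c • b := by
    intro c a b hc hab
    have h := hsmul c (b - a) hc (sub_nonneg.2 hab)
    rw [smul_sub] at h
    exact sub_nonneg.1 h
  -- Riesz-type inequality: for 0 ≤ a, 0 ≤ b, 0 ≤ c : a ⊓ (b + c) ≤ a ⊓ b + a ⊓ c
  have riesz : ∀ a b c : X, 0 ≤ a → 0 ≤ b → 0 ≤ c →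
      a ⊓ (b + c) ≤ a ⊓ b + a ⊓ c := by
    intro a b c ha hb hc
    set d := a ⊓ (b + c) with hd
    have h1 : d - a ⊓ c ≤ a ⊓ b := by
      have h2 : d - a ⊓ c = (d - a) ⊔ (d - c) := by
        rw [sub_eq_add_neg, neg_inf, add_sup, ← sub_eq_add_neg, ← sub_eq_add_neg]
      rw [h2]
      refine sup_le ?_ ?_
      · have hda : d - a ≤ 0 := sub_nonpos.2 inf_le_left
        exact hda.trans (le_inf ha hb)
      · refine le_inf ?_ ?_
        · have h3 : d ≤ a + c := le_add_of_le_of_nonneg inf_le_left hc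
          exact sub_le_iff_le_add.2 h3
        · exact sub_le_iff_le_add.2 inf_le_right
    have := add_le_add_left h1 (a ⊓ c)
    rwa [sub_add_cancel] at this
  -- the unit is positive
  have he0 : (0 : X) ≤ e := by
    obtain ⟨l, hl, _, h2⟩ := hunit |e|
    have h1 : e⁻ ≤ l • e⁺ := by
      have ha : e⁻ ≤ |e| := by
        rw [negPart_def]
        exact sup_le (neg_le_abs e) (abs_nonneg e)
      exact ha.trans (h2.trans (smono l _ _ hl (le_posPart e)))
    obtain ⟨n, hn⟩ := exists_nat_ge l
    have h2' : e⁻ ≤ (n : ℝ) • e⁺ := by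
      refine h1.trans ?_
      have h3 : (0 : X) ≤ ((n : ℝ) - l) • e⁺ :=
        hsmul _ _ (sub_nonneg.2 hn) (posPart_nonneg e)
      rw [sub_smul] at h3
      exact sub_nonneg.1 h3
    have key : ∀ m : ℕ, e⁻ ⊓ ((m : ℝ) • e⁺) = 0 := by
      intro m
      induction m with
      | zero => simpa using negPart_nonneg e
      | succ k ih =>
        have hsplit : ((k + 1 : ℕ) : ℝ) • e⁺ = (k : ℝ) • e⁺ + e⁺ := by
          push_cast
          rw [add_smul, one_smul]
        have hle : e⁻ ⊓ (((k + 1 : ℕ) : ℝ) • e⁺) ≤ e⁻ ⊓ ((k : ℝ) • e⁺) + e⁻ ⊓ e⁺ := by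
          rw [hsplit]
          exact riesz _ _ _ (negPart_nonneg e)
            (hsmul _ _ (Nat.cast_nonneg k) (posPart_nonneg e)) (posPart_nonneg e)
        have hez : e⁻ ⊓ e⁺ = 0 := by
          rw [inf_comm]; exact posPart_inf_negPart_eq_zero e
        rw [ih, hez, add_zero] at hle
        exact le_antisymm hle
          (le_inf (negPart_nonneg e)
            (hsmul _ _ (Nat.cast_nonneg _) (posPart_nonneg e)))
    have hzero : e⁻ = 0 := by
      have h4 : e⁻ = e⁻ ⊓ ((n : ℝ) • e⁺) := (inf_eq_left.2 h2').symm
      rw [key n] at h4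
      exact h4
    have h5 := posPart_sub_negPart e
    rw [hzero, sub_zero] at h5
    rw [← h5]
    exact posPart_nonneg e
  -- key: no positive multiple of e is dominated by an element of N
  have key3 : ∀ (c : ℝ), 0 < c → ∀ m ∈ N, ¬ (c • e ≤ m) := by
    intro c hc m hm hcm
    have heN : e ∈ N := by
      have h1 : e = c⁻¹ • (c • e) := by
        rw [smul_smul, inv_mul_cancel₀ hc.ne', one_smul]
      have h2 : e ≤ c⁻¹ • m := by
        rw [h1]; exact smono _ _ _ (inv_nonneg.2 hc.le) hcm
      refine hsolid e (c⁻¹ • m) ?_ (N.smul_mem _ hm)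
      rw [abs_of_nonneg he0]
      exact h2.trans (le_abs_self _)
    refine hproper (Set.eq_univ_of_forall fun x => ?_)
    obtain ⟨l, hl, h1, h2⟩ := hunit x
    have hx : |x| ≤ l • e := abs_le'.2 ⟨h2, neg_le.1 h1⟩
    refine hsolid x (l • e) ?_ (N.smul_mem l heN)
    rw [abs_of_nonneg (hsmul l e hl he0)]
    exact hx
  -- the sublinear functional p
  set S : X → Set ℝ := fun y => {t : ℝ | ∃ n ∈ N, y ≤ t • e + n} with hSdef
  set p : X → ℝ := fun y => sInf (S y) with hpdef
  have hSne : ∀ y, (S y).Nonempty := by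
    intro y
    obtain ⟨l, hl, _, h2⟩ := hunit y
    exact ⟨l, 0, N.zero_mem, by simpa using h2⟩
  have hSbdd : ∀ y, BddBelow (S y) := by
    intro y
    obtain ⟨l, hl, h1, _⟩ := hunit y
    refine ⟨-l, fun t ht => ?_⟩
    by_contra hcon
    push_neg at hcon
    obtain ⟨n, hn, hyn⟩ := ht
    have h2 : -(l • e) - t • e ≤ n := by
      have h3 : -(l • e) ≤ t • e + n := h1.trans hyn
      have := sub_le_sub_right h3 (t • e)
      rwa [add_comm (t • e) n, add_sub_cancel_right] at this
    have h4 : (-l - t) • e ≤ n := by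
      rwa [sub_smul, neg_smul]
    exact key3 (-l - t) (by linarith) n hn h4
  have hple : ∀ y t, t ∈ S y → p y ≤ t := fun y t ht => csInf_le (hSbdd y) ht
  -- lower bound principle
  have hgen : ∀ (y : X) (c : ℝ), c • e ≤ y → c ≤ p y := by
    intro y c hcy
    refine le_csInf (hSne y) fun t ht => ?_
    by_contra hcon
    push_neg at hcon
    obtain ⟨n, hn, h⟩ := ht
    have h2 : c • e - t • e ≤ n := by
      have h3 : c • e ≤ t • e + n := hcy.trans h
      have := sub_le_sub_right h3 (t • e)
      rwa [add_comm (t • e) n, add_sub_cancel_right] at this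
    rw [← sub_smul] at h2
    exact key3 (c - t) (by linarith) n hn h2
  have hp0 : p 0 = 0 := by
    refine le_antisymm (hple 0 0 ⟨0, N.zero_mem, by simp⟩) ?_
    exact hgen 0 0 (by simp)
  have hpe : p e = 1 := by
    refine le_antisymm (hple e 1 ⟨0, N.zero_mem, by simp⟩) (hgen e 1 (by simp))
  have hpene : p (-e) = -1 := by
    refine le_antisymm (hple (-e) (-1) ⟨0, N.zero_mem, by simp [neg_smul]⟩) ?_
    exact hgen (-e) (-1) (by simp [neg_smul])
  have N_add : ∀ x y : X, p (x + y) ≤ p x + p y := by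
    intro x y
    have H : ∀ a ∈ S x, ∀ b ∈ S y, p (x + y) ≤ a + b := by
      rintro a ⟨n, hn, han⟩ b ⟨m, hm, hbm⟩
      refine hple _ _ ⟨n + m, N.add_mem hn hm, ?_⟩
      calc x + y ≤ (a • e + n) + (b • e + m) := add_le_add han hbm
        _ = (a + b) • e + (n + m) := by rw [add_smul]; abel
    have h1 : ∀ b ∈ S y, p (x + y) - b ≤ p x := by
      intro b hb
      exact le_csInf (hSne x) fun a ha => by
        have := H a ha b hb; linarith
    have h2 : p (x + y) - p x ≤ p y := by
      refine le_csInf (hSne y) fun b hb => ?_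
      have := h1 b hb; linarith
    linarith
  have N_hom : ∀ c : ℝ, 0 < c → ∀ x : X, p (c • x) = c * p x := by
    intro c hc x
    have hset : S (c • x) = c • S x := by
      ext t
      rw [mem_smul_set_iff_inv_smul_mem₀ hc.ne']
      constructor
      · rintro ⟨n, hn, h⟩
        refine ⟨c⁻¹ • n, N.smul_mem _ hn, ?_⟩
        have h2 := smono c⁻¹ _ _ (inv_nonneg.2 hc.le) h
        rw [smul_add, smul_smul, smul_smul, inv_mul_cancel₀ hc.ne', one_smul] at h2
        simpa [smul_eq_mul] using h2
      · rintro ⟨n, hn, h⟩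
        refine ⟨c • n, N.smul_mem _ hn, ?_⟩
        have h2 := smono c _ _ hc.le h
        rw [smul_add, smul_smul] at h2
        simp only [smul_eq_mul] at h2
        rw [← mul_assoc, mul_inv_cancel₀ hc.ne', one_mul] at h2
        exact h2
    show sInf (S (c • x)) = c * sInf (S x)
    rw [hset, Real.sInf_smul_of_nonneg hc.le, smul_eq_mul]
  -- main extension lemma
  have main : ∀ z : X, z ≠ 0 → ∃ ξ : X →ₗ[ℝ] ℝ, (⇑ξ ∈ DeltaN e N) ∧ ξ z = p z := by
    intro z hz
    have hpzz : 0 ≤ p z + p (-z) := by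
      have h := N_add z (-z)
      rw [add_neg_cancel, hp0] at h
      linarith
    set f := LinearPMap.mkSpanSingleton (K := ℝ) (σ := RingHom.id ℝ) z (p z) hz with hf
    have hfle : ∀ v : f.domain, f v ≤ p v := by
      rintro ⟨v, hv⟩
      obtain ⟨c, rfl⟩ := Submodule.mem_span_singleton.1 hv
      have happ : f ⟨c • z, hv⟩ = c * p z := by
        show (LinearPMap.mkSpanSingleton z (p z) hz) ⟨c • z, hv⟩ = c * p z
        rw [← smul_eq_mul]
        exact LinearPMap.mkSpanSingleton'_apply _ _ _ c _
      rw [happ]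
      show c * p z ≤ p (c • z)
      rcases lt_trichotomy c 0 with h | h | h
      · have h2 : p (c • z) = (-c) * p (-z) := by
          rw [show c • z = (-c) • (-z) by rw [neg_smul, smul_neg, neg_neg],
            N_hom (-c) (by linarith) (-z)]
        rw [h2]
        nlinarith
      · subst h
        rw [zero_smul, hp0, zero_mul]
      · rw [N_hom c h z]
    obtain ⟨g, hg1, hg2⟩ := exists_extension_of_le_sublinear f p N_hom N_add hfle
    have hgz : g z = p z := by
      have h := hg1 ⟨z, Submodule.mem_span_singleton_self z⟩
      have h2 : f ⟨z, Submodule.mem_span_singleton_self z⟩ = p z := by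
        show (LinearPMap.mkSpanSingleton z (p z) hz) ⟨z, _⟩ = p z
        exact LinearPMap.mkSpanSingleton_apply ℝ ℝ hz (p z)
      rw [h2] at h
      exact h
    have hpos : ∀ x : X, 0 ≤ x → 0 ≤ g x := by
      intro x hx
      have h1 : g (-x) ≤ p (-x) := hg2 (-x)
      have h2 : p (-x) ≤ 0 :=
        hple (-x) 0 ⟨0, N.zero_mem, by simpa using neg_nonpos.2 hx⟩
      rw [map_neg] at h1
      linarith
    have hge : g e = 1 := by
      have h1 : g e ≤ 1 := by have := hg2 e; rwa [hpe] at this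
      have h2 : g (-e) ≤ -1 := by have := hg2 (-e); rwa [hpene] at this
      rw [map_neg] at h2
      linarith
    have hann : ∀ x ∈ N, g x = 0 := by
      intro m hm
      have h1 : g m ≤ 0 := (hg2 m).trans (hple m 0 ⟨m, hm, by simp⟩)
      have h2 : g (-m) ≤ 0 :=
        (hg2 (-m)).trans (hple (-m) 0 ⟨-m, N.neg_mem hm, by simp⟩)
      rw [map_neg] at h2
      linarith
    exact ⟨g, ⟨g.isLinear, hpos, hge, hann⟩, hgz⟩
  constructor
  · obtain ⟨ξ, hξ, _⟩ := main e he
    exact ⟨ξ, hξ⟩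
  · ext x
    simp only [Set.mem_iInter, SetLike.mem_coe, Set.mem_setOf_eq]
    constructor
    · intro hx ξ hξ
      exact hξ.2.2.2 |x| (hsolid |x| x (abs_abs x).le hx)
    · intro hx
      by_contra hxN
      set z := |x| with hzd
      have hzN : z ∉ N := fun h => hxN (hsolid x z (by rw [hzd, abs_abs]) h)
      have hz0 : z ≠ 0 := fun h => hzN (h ▸ N.zero_mem)
      have hznn : (0 : X) ≤ z := abs_nonneg x
      have hpz : 0 < p z := by
        rcases lt_or_ge 0 (p z) with h | h
        · exact h
        exfalso
        have hch : ∀ k : ℕ, ∃ t ∈ S z, t < 1 / (k + 1) := by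
          intro k
          apply exists_lt_of_csInf_lt (hSne z)
          calc p z ≤ 0 := h
            _ < 1 / (k + 1) := by positivity
        choose t ht htlt using hch
        have htnn : ∀ k, 0 ≤ t k := by
          intro k
          obtain ⟨n, hn, hle⟩ := ht k
          by_contra hcon
          push_neg at hcon
          have h0 : (0 : X) ≤ t k • e + n := hznn.trans hle
          have h2 : -(t k • e) ≤ n := by
            have := sub_le_sub_right h0 (t k • e)
            rwa [zero_sub, add_comm (t k • e) n, add_sub_cancel_right] at this
          refine key3 (-t k) (by linarith) n hn ?_
          rwa [neg_smul]
        set u : ℕ → X := fun k => (z - t k • e) ⊔ 0 with hud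
        have huN : ∀ k, u k ∈ N := by
          intro k
          obtain ⟨n, hn, hle⟩ := ht k
          refine hsolid (u k) n ?_ hn
          have h1 : (0 : X) ≤ u k := le_sup_right
          rw [abs_of_nonneg h1]
          have hle' : z - t k • e ≤ n := by
            rw [add_comm] at hle
            exact sub_le_iff_le_add.2 hle
          have h2 : u k ≤ n ⊔ 0 := sup_le_sup_right hle' 0
          exact h2.trans (sup_le (le_abs_self n) (abs_nonneg n))
        have hbound : ∀ k, unitNorm e (u k - z) ≤ t k := by
          intro k
          have h1 : z - u k ≤ t k • e := sub_le_comm.1 (le_sup_left : z - t k • e ≤ u k)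
          have h3 : u k ≤ z :=
            sup_le (sub_le_self _ (hsmul _ _ (htnn k) he0)) hznn
          have h4 : |u k - z| ≤ t k • e := by
            rw [abs_sub_comm, abs_of_nonneg (sub_nonneg.2 h3)]
            exact h1
          show sInf {l : ℝ | 0 ≤ l ∧ |u k - z| ≤ l • e} ≤ t k
          exact csInf_le ⟨0, fun s hs => hs.1⟩ ⟨htnn k, h4⟩
        have hnn : ∀ k, 0 ≤ unitNorm e (u k - z) := by
          intro k
          exact Real.sInf_nonneg fun s hs => hs.1
        have htend : Tendsto (fun k => unitNorm e (u k - z)) atTop (nhds 0) := by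
          apply squeeze_zero hnn (fun k => (hbound k).trans (htlt k).le)
          exact tendsto_one_div_add_atTop_nhds_zero_nat
        exact hzN (hclosed z u huN htend)
      obtain ⟨ξ, hξ, hξz⟩ := main z hz0
      have h0 : ξ z = 0 := by rw [hzd]; exact hx ξ hξ
      rw [hξz] at h0
      linarith
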